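/- For each k ≥ 1, the generating function Ψ*_k(x) = Σ_{n≥k} W*_{m,r}[n,k;t]_{p,q} x^{n-k} satisfies the first-order relation (1 - x p^{m(t-k)} [mk+r]_{p,q}) · Ψ*_k(x) = Ψ*_{k-1}(x) as formal power series in x over ℤ[p,q]. -/

import Mathlib

open Finset

/-- `p` as an indeterminate in `ℤ[p,q]`. -/
noncomputable def P : MvPolynomial (Fin 2) ℤ := MvPolynomial.X 0

/-- `q` as an indeterminate in `ℤ[p,q]`. -/
noncomputable def Q : MvPolynomial (Fin 2) ℤ := MvPolynomial.X 1

/-- The (p,q)-number `[s]_{p,q} = Σ_{i=0}^{s-1} p^{s-1-i} q^i`. -/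
noncomputable def pqNum (s : ℕ) : MvPolynomial (Fin 2) ℤ :=
  ∑ i ∈ Finset.range s, P ^ (s - 1 - i) * Q ^ i

/-- Second form of the type 2 (p,q)-analogue of the r-Whitney numbers of the
second kind, `W*_{m,r}[n,k;t]_{p,q}`. -/
noncomputable def Wstar (m r t : ℕ) : ℕ → ℕ → MvPolynomial (Fin 2) ℤ
  | 0, 0 => 1
  | 0, _ + 1 => 0
  | n + 1, 0 => pqNum r * P ^ (m * t) * Wstar m r t n 0
  | n + 1, k + 1 =>
      Wstar m r t n k +
        pqNum (m * (k + 1) + r) * P ^ (m * (t - (k + 1))) * Wstar m r t n (k + 1)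

theorem wstar_genfun_step (m r t k : ℕ) (ht : k + 1 ≤ t) :
    (1 - PowerSeries.X * PowerSeries.C (R := MvPolynomial (Fin 2) ℤ)
          (P ^ (m * (t - (k + 1))) * pqNum (m * (k + 1) + r))) *
      PowerSeries.mk (fun n => Wstar m r t (n + (k + 1)) (k + 1)) =
    PowerSeries.mk (fun n => Wstar m r t (n + k) k) := by
  classical
  have hz : ∀ n j : ℕ, n < j → Wstar m r t n j = 0 := by
    intro n
    induction n with
    | zero => intro j hj; match j, hj with
      | j+1, _ => rfl
    | succ n ih =>
      intro j hj
      match j, hj with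
      | j+1, hj =>
        have h1 : n < j := Nat.lt_of_succ_lt_succ hj
        have h2 : n < j + 1 := Nat.lt_of_lt_of_le h1 (Nat.le_succ j)
        simp [Wstar, ih _ h1, ih _ h2]
  refine PowerSeries.ext fun n => ?_
  rw [sub_mul, one_mul, map_sub]
  cases n with
  | zero =>
    simp [PowerSeries.coeff_zero_eq_constantCoeff, mul_comm, Wstar, hz k (k+1) (Nat.lt_succ_self k)]
  | succ n =>
    rw [mul_assoc, PowerSeries.coeff_succ_X_mul]
    simp only [PowerSeries.coeff_mk, PowerSeries.coeff_C_mul]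
    show Wstar m r t (n + 1 + (k+1)) (k+1) - _ = Wstar m r t (n + 1 + k) k
    have : n + 1 + (k + 1) = (n + 1 + k) + 1 := by ring
    rw [this, Wstar]
    ring
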